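/- In the i.i.d. persuasion model with q_j > 0 for all types j, let (x, y) ∈ [0,1]^m × [0,1]^m and define τ = (x_1/q_1, …, x_m/q_m). The pair (x, y) is a realizable s-signature if and only if (a) ‖x‖_1 = 1/n, (b) x + (n−1)y = q, and (c) τ is a realizable symmetric reduced form of an allocation rule with n i.i.d. bidders, m types, and type distribution q. -/
import Mathlib


open Finset

namespace IID

variable {n m : ℕ}

/-- the i.i.d. prior on states `θ ∈ [m]^n`: `λ(θ) = ∏ i, q (θ i)` -/
def prior (q : Fin m → ℝ) (θ : Fin n → Fin m) : ℝ := ∏ i, q (θ i)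

/-- a direct signaling scheme: each state gets a probability distribution over the
`n` signals, signal `i` recommending action `i` -/
def IsScheme (φ : (Fin n → Fin m) → Fin n → ℝ) : Prop :=
  (∀ θ i, 0 ≤ φ θ i) ∧ ∀ θ, ∑ i, φ θ i = 1

/-- incentive compatibility: conditioned on each signal `i`, the recommended action `i`
maximizes the receiver's (type-determined) expected payoff -/
def IC (q ρ : Fin m → ℝ) (φ : (Fin n → Fin m) → Fin n → ℝ) : Prop :=
  ∀ i j : Fin n,
    ∑ θ : Fin n → Fin m, prior q θ * φ θ i * ρ (θ j) ≤
      ∑ θ : Fin n → Fin m, prior q θ * φ θ i * ρ (θ i)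

/-- expected sender utility when the receiver follows the recommendations -/
def senderUtil (q ξ : Fin m → ℝ) (φ : (Fin n → Fin m) → Fin n → ℝ) : ℝ :=
  ∑ θ : Fin n → Fin m, ∑ i, prior q θ * φ θ i * ξ (θ i)

/-- the signature of a scheme: `signature q φ i j k` is the joint probability that the
scheme sends signal `i` and action `j` has type `k` (entry `M^{σ_i}_{jk}`) -/
def signature (q : Fin m → ℝ) (φ : (Fin n → Fin m) → Fin n → ℝ)
    (i j : Fin n) (k : Fin m) : ℝ :=
  ∑ θ : Fin n → Fin m, if θ j = k then prior q θ * φ θ i else 0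

end IID

open IID

namespace IID

/-- `τ` is a realizable symmetric reduced form for a single-item auction with `n`
i.i.d. bidders, `m` types and type distribution `q`: there is a (randomized)
allocation rule `A` mapping type profiles to a winner in `[n] ∪ {*}` (`none` = no
allocation) such that for each bidder `i` and type `j`, the joint probability that
`i` has type `j` and receives the item equals `τ j * q j` (i.e. the conditional
probability that `i` receives the item given type `j` is `τ j`). -/
def RealizableReducedForm (n : ℕ) {m : ℕ} (q : Fin m → ℝ) (τ : Fin m → ℝ) : Prop :=
  ∃ A : (Fin n → Fin m) → Option (Fin n) → ℝ,
    (∀ θ o, 0 ≤ A θ o) ∧ (∀ θ, ∑ o : Option (Fin n), A θ o = 1) ∧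
    ∀ i j, (∑ θ : Fin n → Fin m, if θ i = j then prior q θ * A θ (some i) else 0)
      = τ j * q j

end IID

/-! ### Auxiliary lemmas -/

namespace IID

variable {n m : ℕ}

lemma prior_pos {q : Fin m → ℝ} (hq0 : ∀ k, 0 < q k) (θ : Fin n → Fin m) :
    0 < prior q θ :=
  Finset.prod_pos fun i _ => hq0 (θ i)

lemma sum_prior (q : Fin m → ℝ) (hq1 : ∑ k, q k = 1) :
    ∑ θ : Fin n → Fin m, prior q θ = 1 := by
  have : ∑ θ : Fin n → Fin m, prior q θ = (∑ k, q k) ^ n := by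
    rw [← Fin.prod_const n (∑ k, q k), Finset.prod_univ_sum]
    simp [Fintype.piFinset_univ, prior]
  rw [this, hq1, one_pow]

lemma prior_comp (q : Fin m → ℝ) (π : Equiv.Perm (Fin n)) (θ : Fin n → Fin m) :
    prior q (θ ∘ π) = prior q θ :=
  Equiv.prod_comp π (fun i => q (θ i))

lemma sum_comp_pi (π : Equiv.Perm (Fin n)) (f : (Fin n → Fin m) → ℝ) :
    ∑ θ : Fin n → Fin m, f (θ ∘ π) = ∑ θ : Fin n → Fin m, f θ :=
  Equiv.sum_comp (Equiv.arrowCongr π.symm (Equiv.refl (Fin m))) f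

lemma prior_update (q : Fin m → ℝ) (θ : Fin n → Fin m) (j : Fin n) (v : Fin m) :
    prior q (Function.update θ j v) = q v * ∏ i ∈ Finset.univ.erase j, q (θ i) := by
  unfold prior
  have : (fun i => q (Function.update θ j v i)) = Function.update (fun i => q (θ i)) j (q v) := by
    funext i; by_cases h : i = j <;> simp [h, Function.update]
  rw [this, Finset.prod_update_of_mem (Finset.mem_univ j), Finset.sdiff_singleton_eq_erase]

lemma prior_split (q : Fin m → ℝ) (θ : Fin n → Fin m) (j : Fin n) :
    prior q θ = q (θ j) * ∏ i ∈ Finset.univ.erase j, q (θ i) := by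
  have := prior_update q θ j (θ j)
  rwa [Function.update_eq_self] at this

/-- the marginal of the i.i.d. prior on any single coordinate is `q` -/
lemma marginal {q : Fin m → ℝ} (hq1 : ∑ k, q k = 1) (j : Fin n) (k : Fin m) :
    ∑ θ : Fin n → Fin m, (if θ j = k then prior q θ else 0) = q k := by
  set f : Fin m → ℝ := fun v => ∑ θ : Fin n → Fin m, (if θ j = v then prior q θ else 0) with hf
  have key : ∀ v w : Fin m, f w * q v = f v * q w := by
    intro v w
    have hinv : Function.Involutive
        (fun θ : Fin n → Fin m => Function.update θ j (Equiv.swap v w (θ j))) := by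
      intro θ
      simp [Function.update_idem]
    rw [hf]
    simp only [Finset.sum_mul]
    rw [← Equiv.sum_comp (Function.Involutive.toPerm _ hinv)
      (fun θ => (if θ j = w then prior q θ else 0) * q v)]
    refine Finset.sum_congr rfl fun θ _ => ?_
    have happ : ((Function.Involutive.toPerm _ hinv) θ : Fin n → Fin m)
        = Function.update θ j (Equiv.swap v w (θ j)) := rfl
    rw [happ]
    by_cases h : θ j = v
    · have h1 : Function.update θ j (Equiv.swap v w (θ j)) j = w := by simp [h]
      rw [if_pos h1, if_pos h, prior_update, prior_split q θ j, h]
      rw [Equiv.swap_apply_left]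
      ring
    · have h1 : Function.update θ j (Equiv.swap v w (θ j)) j ≠ w := by
        simp only [Function.update_self]
        intro hc
        apply h
        have := (Equiv.swap v w).injective (a₁ := θ j) (a₂ := v)
        exact this (by rw [hc, Equiv.swap_apply_left])
      rw [if_neg h1, if_neg h, zero_mul, zero_mul]
  have h1 : ∑ w, f w = 1 := by
    rw [hf]
    rw [Finset.sum_comm]
    simp [sum_prior q hq1]
  calc f k = ∑ w, f k * q w := by rw [← Finset.mul_sum, hq1, mul_one]
    _ = ∑ w, f w * q k := by refine Finset.sum_congr rfl fun w _ => (key w k)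
    _ = q k := by rw [← Finset.sum_mul, h1, one_mul]

lemma sum_signature_k (q : Fin m → ℝ) (φ : (Fin n → Fin m) → Fin n → ℝ) (i j : Fin n) :
    ∑ k, signature q φ i j k = ∑ θ : Fin n → Fin m, prior q θ * φ θ i := by
  unfold signature
  rw [Finset.sum_comm]
  simp

lemma sum_signature_i (q : Fin m → ℝ) (hq1 : ∑ k, q k = 1)
    (φ : (Fin n → Fin m) → Fin n → ℝ) (hφ : IsScheme φ) (j : Fin n) (k : Fin m) :
    ∑ i, signature q φ i j k = q k := by
  unfold signature
  rw [Finset.sum_comm]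
  have h : ∀ θ : Fin n → Fin m,
      ∑ i, (if θ j = k then prior q θ * φ θ i else 0) = if θ j = k then prior q θ else 0 := by
    intro θ
    by_cases h : θ j = k
    · simp only [h, if_true, ← Finset.mul_sum, hφ.2 θ, mul_one]
    · simp [h]
  rw [Finset.sum_congr rfl fun θ _ => h θ]
  exact marginal hq1 j k

/-- the symmetrization of an allocation rule into a signaling scheme -/
noncomputable def symScheme (A : (Fin n → Fin m) → Option (Fin n) → ℝ) :
    (Fin n → Fin m) → Fin n → ℝ :=
  fun θ i => (∑ π : Equiv.Perm (Fin n), A (θ ∘ π) (some (π⁻¹ i))) / (n.factorial : ℝ)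

/-- the matrix `G k a b = ∑_η [η b = k] λ(η) A(η, a)` -/
noncomputable def Gmat (q : Fin m → ℝ) (A : (Fin n → Fin m) → Option (Fin n) → ℝ)
    (k : Fin m) (a b : Fin n) : ℝ :=
  ∑ η : Fin n → Fin m, if η b = k then prior q η * A η (some a) else 0

lemma signature_symScheme (q : Fin m → ℝ) (A : (Fin n → Fin m) → Option (Fin n) → ℝ)
    (i j : Fin n) (k : Fin m) :
    signature q (symScheme A) i j k
      = (∑ π : Equiv.Perm (Fin n), Gmat q A k (π⁻¹ i) (π⁻¹ j)) / (n.factorial : ℝ) := by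
  unfold signature symScheme
  have step1 : ∀ θ : Fin n → Fin m,
      (if θ j = k then prior q θ * ((∑ π : Equiv.Perm (Fin n), A (θ ∘ π) (some (π⁻¹ i))) / (n.factorial : ℝ)) else 0)
        = (∑ π : Equiv.Perm (Fin n), if θ j = k then prior q θ * A (θ ∘ π) (some (π⁻¹ i)) else 0) / (n.factorial : ℝ) := by
    intro θ
    by_cases h : θ j = k
    · simp only [h, if_true, Finset.mul_sum, Finset.sum_div, mul_div_assoc]
    · simp [h]
  rw [Finset.sum_congr rfl fun θ _ => step1 θ, ← Finset.sum_div, Finset.sum_comm]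
  congr 1
  refine Finset.sum_congr rfl fun π _ => ?_
  calc ∑ θ : Fin n → Fin m, (if θ j = k then prior q θ * A (θ ∘ π) (some (π⁻¹ i)) else 0)
      = ∑ θ : Fin n → Fin m, (if (θ ∘ ⇑π⁻¹) j = k then prior q (θ ∘ ⇑π⁻¹) * A ((θ ∘ ⇑π⁻¹) ∘ π) (some (π⁻¹ i)) else 0) :=
        (sum_comp_pi π⁻¹ (fun θ => if θ j = k then prior q θ * A (θ ∘ π) (some (π⁻¹ i)) else 0)).symm
    _ = Gmat q A k (π⁻¹ i) (π⁻¹ j) := by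
        refine Finset.sum_congr rfl fun θ _ => ?_
        have h1 : (θ ∘ ⇑π⁻¹) ∘ ⇑π = θ := by
          funext z; simp
        rw [h1, prior_comp q π⁻¹ θ]
        rfl

lemma symScheme_isScheme (A : (Fin n → Fin m) → Option (Fin n) → ℝ)
    (hA0 : ∀ θ o, 0 ≤ A θ o) (hA1 : ∀ θ, ∑ o : Option (Fin n), A θ o = 1)
    (hnone : ∀ θ, A θ none = 0) : IsScheme (symScheme A) := by
  constructor
  · intro θ i
    exact div_nonneg (Finset.sum_nonneg fun π _ => hA0 _ _) (Nat.cast_nonneg _)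
  · intro θ
    unfold symScheme
    rw [← Finset.sum_div, Finset.sum_comm]
    have h : ∀ π : Equiv.Perm (Fin n), ∑ i, A (θ ∘ π) (some (π⁻¹ i)) = 1 := by
      intro π
      rw [Equiv.sum_comp (π⁻¹ : Equiv.Perm (Fin n)) (fun a => A (θ ∘ π) (some a))]
      have := hA1 (θ ∘ π)
      rw [Fintype.sum_option, hnone (θ ∘ π), zero_add] at this
      exact this
    rw [Finset.sum_congr rfl fun π _ => h π, Finset.sum_const, Finset.card_univ,
      Fintype.card_perm, Fintype.card_fin, nsmul_eq_mul, mul_one]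
    exact div_self (by exact_mod_cast Nat.factorial_ne_zero n)

lemma perm_pair_transitive {i j i' j' : Fin n} (hij : i ≠ j) (hij' : i' ≠ j') :
    ∃ ρ : Equiv.Perm (Fin n), ρ i' = i ∧ ρ j' = j := by
  set σ₁ := Equiv.swap i' i with hσ₁
  set j'' := σ₁ j' with hj''
  have hij'' : i ≠ j'' := by
    intro hc
    apply hij'
    have : σ₁ i' = σ₁ j' := by rw [← hj'', ← hc, hσ₁, Equiv.swap_apply_left]
    exact σ₁.injective this
  refine ⟨Equiv.swap j'' j * σ₁, ?_, ?_⟩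
  · show Equiv.swap j'' j (σ₁ i') = i
    rw [hσ₁, Equiv.swap_apply_left]
    exact Equiv.swap_apply_of_ne_of_ne hij'' hij
  · show Equiv.swap j'' j (σ₁ j') = j
    rw [← hj'', Equiv.swap_apply_left]

lemma sum_Gmat_offdiag_eq (q : Fin m → ℝ) (A : (Fin n → Fin m) → Option (Fin n) → ℝ)
    {i j i' j' : Fin n} (hij : i ≠ j) (hij' : i' ≠ j') (k : Fin m) :
    ∑ π : Equiv.Perm (Fin n), Gmat q A k (π⁻¹ i) (π⁻¹ j)
      = ∑ π : Equiv.Perm (Fin n), Gmat q A k (π⁻¹ i') (π⁻¹ j') := by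
  obtain ⟨ρ, hρi, hρj⟩ := perm_pair_transitive hij hij'
  calc ∑ π : Equiv.Perm (Fin n), Gmat q A k (π⁻¹ i) (π⁻¹ j)
      = ∑ π : Equiv.Perm (Fin n), Gmat q A k ((ρ * π)⁻¹ i) ((ρ * π)⁻¹ j) :=
        (Equiv.sum_comp (Equiv.mulLeft ρ) (fun π => Gmat q A k (π⁻¹ i) (π⁻¹ j))).symm
    _ = ∑ π : Equiv.Perm (Fin n), Gmat q A k (π⁻¹ i') (π⁻¹ j') := by
        refine Finset.sum_congr rfl fun π _ => ?_
        have e1 : (ρ * π)⁻¹ i = π⁻¹ i' := by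
          rw [mul_inv_rev, ← hρi]
          simp
        have e2 : (ρ * π)⁻¹ j = π⁻¹ j' := by
          rw [mul_inv_rev, ← hρj]
          simp
        rw [e1, e2]

end IID
/-- for `(x, y) ∈ [0,1]^m × [0,1]^m` and `τ = (x₁/q₁, …, x_m/q_m)`,
the pair `(x, y)` is a realizable s-signature iff (a) `‖x‖₁ = 1/n`,
(b) `x + (n−1)y = q`, and (c) `τ` is a realizable symmetric reduced form of an
allocation rule with `n` i.i.d. bidders, `m` types and type distribution `q`. -/
theorem s_signature_iff_reduced_form
    {n m : ℕ} (q : Fin m → ℝ) (hq0 : ∀ k, 0 < q k) (hq1 : ∑ k, q k = 1)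
    (x y : Fin m → ℝ)
    (hx : ∀ k, x k ∈ Set.Icc (0 : ℝ) 1) (hy : ∀ k, y k ∈ Set.Icc (0 : ℝ) 1) :
    (∃ φ : (Fin n → Fin m) → Fin n → ℝ, IsScheme φ ∧
      (∀ i k, signature q φ i i k = x k) ∧
      (∀ i j, j ≠ i → ∀ k, signature q φ i j k = y k))
    ↔ ((∑ k, |x k| = 1 / n) ∧
        (∀ k, x k + ((n : ℝ) - 1) * y k = q k) ∧
        RealizableReducedForm n q (fun k => x k / q k)) := by
  constructor
  · rintro ⟨φ, hφ, hdiag, hoff⟩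
    have hn : n ≠ 0 := by
      rintro rfl
      have := hφ.2 (fun i => i.elim0)
      simpa using this
    have hn1 : 1 ≤ n := Nat.one_le_iff_ne_zero.2 hn
    have hnr : (n : ℝ) ≠ 0 := Nat.cast_ne_zero.2 hn
    have hA : ∀ i : Fin n, ∑ θ : Fin n → Fin m, prior q θ * φ θ i = ∑ k, x k := by
      intro i
      rw [← sum_signature_k q φ i i]
      exact Finset.sum_congr rfl fun k _ => hdiag i k
    have htot : ∑ i, ∑ θ : Fin n → Fin m, prior q θ * φ θ i = 1 := by
      rw [Finset.sum_comm]
      have h : ∀ θ : Fin n → Fin m, ∑ i, prior q θ * φ θ i = prior q θ := by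
        intro θ; rw [← Finset.mul_sum, hφ.2 θ, mul_one]
      rw [Finset.sum_congr rfl fun θ _ => h θ]
      exact sum_prior q hq1
    have hxsum : ∑ k, x k = 1 / n := by
      rw [Finset.sum_congr rfl fun i _ => hA i, Finset.sum_const, Finset.card_univ,
        Fintype.card_fin, nsmul_eq_mul] at htot
      field_simp
      linarith
    refine ⟨?_, ?_, ?_⟩
    · rw [Finset.sum_congr rfl fun k _ => abs_of_nonneg (hx k).1]
      exact hxsum
    · intro k
      obtain ⟨j⟩ : Nonempty (Fin n) := ⟨⟨0, Nat.pos_of_ne_zero hn⟩⟩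
      have hs := sum_signature_i q hq1 φ hφ j k
      rw [← Finset.add_sum_erase _ _ (Finset.mem_univ j), hdiag j k] at hs
      have hoffv : ∀ i ∈ Finset.univ.erase j, signature q φ i j k = y k := by
        intro i hi
        exact hoff i j (Finset.ne_of_mem_erase hi).symm k
      rw [Finset.sum_congr rfl hoffv, Finset.sum_const,
        Finset.card_erase_of_mem (Finset.mem_univ j), Finset.card_univ, Fintype.card_fin,
        nsmul_eq_mul, Nat.cast_sub hn1, Nat.cast_one] at hs
      linarith
    · refine ⟨fun θ o => Option.elim o 0 (fun i => φ θ i), ?_, ?_, ?_⟩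
      · rintro θ (_ | i)
        · exact le_refl 0
        · exact hφ.1 θ i
      · intro θ
        rw [Fintype.sum_option]
        simpa using hφ.2 θ
      · intro i j
        rw [div_mul_cancel₀ _ (hq0 j).ne']
        exact hdiag i j
  · rintro ⟨ha, hb, A, hA0, hA1, hAr⟩
    have hm : m ≠ 0 := by rintro rfl; simp at hq1
    have hn : n ≠ 0 := by
      rintro rfl
      set k : Fin m := ⟨0, Nat.pos_of_ne_zero hm⟩
      have h0 : x k = 0 := by
        have h1 : ∑ k, |x k| = 0 := by rw [ha]; norm_num
        have h2 := (Finset.sum_eq_zero_iff_of_nonneg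
          (fun k _ => abs_nonneg (x k))).1 h1 k (Finset.mem_univ k)
        exact abs_eq_zero.1 h2
      have h3 := hb k
      have h4 := hq0 k
      have h5 := (hy k).1
      rw [h0] at h3
      norm_num at h3
      linarith
    have hn1 : 1 ≤ n := Nat.one_le_iff_ne_zero.2 hn
    have hnr : (n : ℝ) ≠ 0 := Nat.cast_ne_zero.2 hn
    have hfac : ((n.factorial : ℝ)) ≠ 0 := by exact_mod_cast Nat.factorial_ne_zero n
    have hxnn : ∀ k, 0 ≤ x k := fun k => (hx k).1
    have ha' : ∑ k, x k = 1 / n := by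
      rw [← ha]
      exact Finset.sum_congr rfl fun k _ => (abs_of_nonneg (hxnn k)).symm
    have hred : ∀ (a : Fin n) (k : Fin m), Gmat q A k a a = x k := by
      intro a k
      unfold Gmat
      rw [hAr a k, div_mul_cancel₀ _ (hq0 k).ne']
    have hsome : ∀ i, ∑ θ : Fin n → Fin m, prior q θ * A θ (some i) = 1 / n := by
      intro i
      have h1 : ∑ θ : Fin n → Fin m, prior q θ * A θ (some i)
          = ∑ k, ∑ θ : Fin n → Fin m, (if θ i = k then prior q θ * A θ (some i) else 0) := by
        rw [Finset.sum_comm]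
        simp
      rw [h1, Finset.sum_congr rfl fun k _ => hAr i k, ← ha']
      exact Finset.sum_congr rfl fun k _ => div_mul_cancel₀ _ (hq0 k).ne'
    have hnone : ∀ θ, A θ none = 0 := by
      have htot : ∑ θ : Fin n → Fin m, prior q θ * A θ none = 0 := by
        have h1 : ∑ θ : Fin n → Fin m, prior q θ * (∑ o : Option (Fin n), A θ o) = 1 := by
          rw [Finset.sum_congr rfl fun θ _ => by rw [hA1 θ, mul_one]]
          exact sum_prior q hq1
        have h2 : ∀ θ : Fin n → Fin m, prior q θ * (∑ o : Option (Fin n), A θ o)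
            = prior q θ * A θ none + ∑ i, prior q θ * A θ (some i) := by
          intro θ
          rw [Fintype.sum_option, mul_add, Finset.mul_sum]
        have h3 : ∑ θ : Fin n → Fin m, ∑ i, prior q θ * A θ (some i) = 1 := by
          rw [Finset.sum_comm, Finset.sum_congr rfl fun i _ => hsome i, Finset.sum_const,
            Finset.card_univ, Fintype.card_fin, nsmul_eq_mul]
          field_simp
        rw [Finset.sum_congr rfl fun θ _ => h2 θ, Finset.sum_add_distrib, h3] at h1
        linarith
      intro θ
      have h4 := (Finset.sum_eq_zero_iff_of_nonneg
        (fun θ _ => mul_nonneg (prior_pos hq0 θ).le (hA0 θ none))).1 htot θ (Finset.mem_univ θ)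
      rcases mul_eq_zero.1 h4 with h | h
      · exact absurd h (prior_pos hq0 θ).ne'
      · exact h
    have hscheme : IsScheme (symScheme A) := symScheme_isScheme A hA0 hA1 hnone
    have hdiag' : ∀ (i : Fin n) (k : Fin m), signature q (symScheme A) i i k = x k := by
      intro i k
      rw [signature_symScheme, Finset.sum_congr rfl fun π _ => hred (π⁻¹ i) k,
        Finset.sum_const, Finset.card_univ, Fintype.card_perm, Fintype.card_fin, nsmul_eq_mul]
      exact mul_div_cancel_left₀ _ hfac
    refine ⟨symScheme A, hscheme, hdiag', ?_⟩
    intro i j hji k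
    have hn2 : (1 : ℝ) < n := by
      have hnt : Nontrivial (Fin n) := ⟨⟨j, i, hji⟩⟩
      have : 1 < Fintype.card (Fin n) := Fintype.one_lt_card_iff_nontrivial.2 hnt
      rw [Fintype.card_fin] at this
      exact_mod_cast this
    have hs := sum_signature_i q hq1 (symScheme A) hscheme j k
    rw [← Finset.add_sum_erase _ _ (Finset.mem_univ j), hdiag' j k] at hs
    have heq : ∀ i' ∈ Finset.univ.erase j,
        signature q (symScheme A) i' j k = signature q (symScheme A) i j k := by
      intro i' hi'
      rw [signature_symScheme, signature_symScheme,
        sum_Gmat_offdiag_eq q A (Finset.ne_of_mem_erase hi') hji.symm k]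
    rw [Finset.sum_congr rfl heq, Finset.sum_const,
      Finset.card_erase_of_mem (Finset.mem_univ j), Finset.card_univ, Fintype.card_fin,
      nsmul_eq_mul, Nat.cast_sub hn1, Nat.cast_one] at hs
    have hb' := hb k
    have hne : (n : ℝ) - 1 ≠ 0 := by linarith
    have hmul : ((n : ℝ) - 1) * signature q (symScheme A) i j k = ((n : ℝ) - 1) * y k := by
      linarith
    exact mul_left_cancel₀ hne hmul
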